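/- Let G = (V,E) be a locally finite, connected, vertex-transitive graph with spectral radius ρ. Then there exist a constant c_1 > 0 and an integer n_1 ≥ 0 such that for all integers k ≥ 1 and n ≥ 2k + n_1: u_{n−2k} ≥ c_1·u_n·ρ^{−2k}. -/

import Mathlib

open SimpleGraph Filter

attribute [local instance] Classical.propDecidable


namespace SimpleGraph.Walk
variable {V : Type*} {G : SimpleGraph V}

lemma exists_split' {x z : V} (w : G.Walk x z) (a : ℕ) (ha : a ≤ w.length) :
    ∃ (y : V) (p : G.Walk x y) (q : G.Walk y z), p.length = a ∧ p.append q = w := by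
  induction w generalizing a with
  | nil =>
    obtain rfl : a = 0 := by simpa using ha
    exact ⟨_, .nil, .nil, rfl, rfl⟩
  | cons h r ih =>
    cases a with
    | zero => exact ⟨_, .nil, .cons h r, rfl, rfl⟩
    | succ a =>
      obtain ⟨y, p, q, hp, happ⟩ := ih a (by simpa using ha)
      exact ⟨y, .cons h p, q, by simp [hp], by simp [happ]⟩

lemma append_inj'' {x y z : V} (p : G.Walk x y) :
    ∀ (p' : G.Walk x y) (q q' : G.Walk y z), p.length = p'.length →
    p.append q = p'.append q' → p = p' ∧ q = q' := by
  induction p with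
  | nil =>
    intro p' q q' hl h
    cases p' with
    | nil => exact ⟨rfl, h⟩
    | cons _ _ => simp at hl
  | cons hadj r ih =>
    intro p' q q' hl h
    cases p' with
    | nil => simp at hl
    | cons hadj' r' =>
      rw [cons_append, cons_append] at h
      injection h with h1 h2 h3 h4
      subst h2
      obtain ⟨h5, h6⟩ := ih r' q q' (by simpa using hl) (eq_of_heq h4)
      exact ⟨by rw [h5], h6⟩

end SimpleGraph.Walk

namespace SimpleGraph
variable {V : Type*} [DecidableEq V] {G : SimpleGraph V}

lemma walk_len0_subsingleton {x y : V} (p q : G.Walk x y) (hp : p.length = 0)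
    (hq : q.length = 0) : p = q := by
  obtain rfl : x = y := p.eq_of_length_eq_zero hp
  rw [Walk.nil_iff_eq_nil.mp (Walk.length_eq_zero_iff.mp hp), Walk.nil_iff_eq_nil.mp (Walk.length_eq_zero_iff.mp hq)]

lemma walk_len1_subsingleton {x y : V} (p q : G.Walk x y) (hp : p.length = 1)
    (hq : q.length = 1) : p = q := by
  cases p with
  | nil => simp at hp
  | cons h r =>
    cases q with
    | nil => simp at hq
    | cons h' r' =>
      simp only [Walk.length_cons] at hp hq
      have hp0 : r.length = 0 := by omega
      have hq0 : r'.length = 0 := by omega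
      obtain rfl := r.eq_of_length_eq_zero hp0
      obtain rfl := r'.eq_of_length_eq_zero hq0
      rw [Walk.nil_iff_eq_nil.mp (Walk.length_eq_zero_iff.mp hp0), Walk.nil_iff_eq_nil.mp (Walk.length_eq_zero_iff.mp hq0)]

variable (G) [G.LocallyFinite]

/-- The number of walks of length `n` from `x` to `y`. -/
def NW (n : ℕ) (x y : V) : ℕ := (G.finsetWalkLength n x y).card

variable {G}

lemma NW_comm (n : ℕ) (x y : V) : NW G n x y = NW G n y x := by
  apply Finset.card_bij (fun w _ => w.reverse)
  · intro w hw
    rw [mem_finsetWalkLength_iff] at hw ⊢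
    simpa using hw
  · intro w _ w' _ h
    simpa using congrArg Walk.reverse h
  · intro w hw
    rw [mem_finsetWalkLength_iff] at hw
    refine ⟨w.reverse, ?_, by simp⟩
    rw [mem_finsetWalkLength_iff]
    simpa using hw

lemma NW_fiber (a b : ℕ) (x z y : V) :
    ((G.finsetWalkLength (a+b) x z).filter (fun w => w.getVert a = y)).card
      = NW G a x y * NW G b y z := by
  rw [NW, NW, ← Finset.card_product]
  refine Eq.symm ?_
  apply Finset.card_bij (fun (pq : G.Walk x y × G.Walk y z) _ => pq.1.append pq.2)
  · intro pq hpq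
    simp only [Finset.mem_product, mem_finsetWalkLength_iff] at hpq
    simp only [Finset.mem_filter, mem_finsetWalkLength_iff]
    refine ⟨by rw [Walk.length_append, hpq.1, hpq.2], ?_⟩
    rw [Walk.getVert_append]
    simp [hpq.1]
  · intro pq hpq pq' hpq' h
    simp only [Finset.mem_product, mem_finsetWalkLength_iff] at hpq hpq'
    obtain ⟨h1, h2⟩ := Walk.append_inj'' _ _ _ _ (by rw [hpq.1, hpq'.1]) h
    exact Prod.ext h1 h2
  · intro w hw
    simp only [Finset.mem_filter, mem_finsetWalkLength_iff] at hw
    obtain ⟨y', p, q, hp, rfl⟩ := Walk.exists_split' w a (by omega)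
    have hy : y' = y := by
      have h2 := hw.2
      rw [Walk.getVert_append] at h2
      simpa [hp] using h2
    subst hy
    have hq : q.length = b := by
      have h1 := hw.1; rw [Walk.length_append, hp] at h1; omega
    exact ⟨⟨p, q⟩, by simp [Finset.mem_product, mem_finsetWalkLength_iff, hp, hq], rfl⟩

lemma NW_split (a b : ℕ) (x z : V) (T : Finset V)
    (hT : ∀ w ∈ G.finsetWalkLength (a+b) x z, w.getVert a ∈ T) :
    NW G (a+b) x z = ∑ y ∈ T, NW G a x y * NW G b y z := by
  rw [NW, Finset.card_eq_sum_card_fiberwise hT]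
  exact Finset.sum_congr rfl fun y _ => NW_fiber a b x z y

lemma NW_zero (x : V) : NW G 0 x x = 1 := by
  rw [NW, Finset.card_eq_one]
  refine ⟨Walk.nil, ?_⟩
  ext w
  simp only [Finset.mem_singleton, mem_finsetWalkLength_iff]
  constructor
  · intro h; exact Walk.nil_iff_eq_nil.mp (Walk.length_eq_zero_iff.mp h)
  · rintro rfl; rfl

lemma NW_zero_le (x y : V) : NW G 0 x y ≤ 1 :=
  Finset.card_le_one.mpr fun p hp q hq =>
    walk_len0_subsingleton p q (mem_finsetWalkLength_iff.mp hp) (mem_finsetWalkLength_iff.mp hq)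

lemma NW_one_le (x y : V) : NW G 1 x y ≤ 1 :=
  Finset.card_le_one.mpr fun p hp q hq =>
    walk_len1_subsingleton p q (mem_finsetWalkLength_iff.mp hp) (mem_finsetWalkLength_iff.mp hq)

lemma NW_supermult (a b : ℕ) (x : V) : NW G a x x * NW G b x x ≤ NW G (a+b) x x := by
  rw [NW_split a b x x (insert x ((G.finsetWalkLength (a+b) x x).image (fun w => w.getVert a)))
    (fun w hw => Finset.mem_insert.mpr (Or.inr (Finset.mem_image_of_mem _ hw)))]
  exact Finset.single_le_sum (f := fun y => NW G a x y * NW G b y x)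
    (fun i _ => Nat.zero_le _) (Finset.mem_insert_self x _)

lemma NW_le_pow (d : ℕ) (hd : ∀ v : V, G.degree v ≤ d) (n : ℕ) :
    ∀ x y : V, NW G n x y ≤ d ^ n := by
  induction n with
  | zero => intro x y; simpa using NW_zero_le x y
  | succ n ih =>
    intro x y
    set T := (G.finsetWalkLength (1+n) x y).image (fun w => w.getVert 1) with hT
    have hsub : T ⊆ G.neighborFinset x := by
      intro v hv
      simp only [hT, Finset.mem_image] at hv
      obtain ⟨w, hw, rfl⟩ := hv
      rw [mem_finsetWalkLength_iff] at hw
      rw [mem_neighborFinset]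
      have h0 := w.adj_getVert_succ (i := 0) (by omega)
      simpa [w.getVert_zero] using h0
    calc NW G (n+1) x y = NW G (1+n) x y := by rw [Nat.add_comm]
    _ = ∑ v ∈ T, NW G 1 x v * NW G n v y :=
        NW_split 1 n x y T (fun w hw => Finset.mem_image_of_mem _ hw)
    _ ≤ ∑ _v ∈ T, 1 * d ^ n := Finset.sum_le_sum (fun v _ => Nat.mul_le_mul (NW_one_le x v) (ih v y))
    _ = T.card * d ^ n := by simp [Finset.sum_const, Nat.one_mul]
    _ ≤ d * d ^ n := Nat.mul_le_mul_right _ (le_trans (Finset.card_le_card hsub) (hd x))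
    _ = d ^ (n+1) := by rw [pow_succ, Nat.mul_comm]

lemma NW_cs (a b : ℕ) (x : V) :
    ((NW G (a+b) x x : ℝ))^2 ≤ (NW G (2*a) x x : ℝ) * (NW G (2*b) x x : ℝ) := by
  classical
  set T := ((G.finsetWalkLength (a+b) x x).image (fun w => w.getVert a)) ∪
           ((G.finsetWalkLength (a+a) x x).image (fun w => w.getVert a)) ∪
           ((G.finsetWalkLength (b+b) x x).image (fun w => w.getVert b)) with hT
  have h1 : NW G (a+b) x x = ∑ y ∈ T, NW G a x y * NW G b y x :=
    NW_split a b x x T (fun w hw => by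
      simp only [hT, Finset.mem_union]
      exact Or.inl (Or.inl (Finset.mem_image_of_mem _ hw)))
  have h2 : NW G (2*a) x x = ∑ y ∈ T, NW G a x y * NW G a y x := by
    rw [two_mul]
    exact NW_split a a x x T (fun w hw => by
      simp only [hT, Finset.mem_union]
      exact Or.inl (Or.inr (Finset.mem_image_of_mem _ hw)))
  have h3 : NW G (2*b) x x = ∑ y ∈ T, NW G b x y * NW G b y x := by
    rw [two_mul]
    exact NW_split b b x x T (fun w hw => by
      simp only [hT, Finset.mem_union]
      exact Or.inr (Finset.mem_image_of_mem _ hw))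
  rw [h1, h2, h3]
  push_cast
  have key := Finset.sum_mul_sq_le_sq_mul_sq T (fun y => (NW G a x y : ℝ))
    (fun y => (NW G b x y : ℝ))
  calc (∑ y ∈ T, ((NW G a x y : ℝ) * (NW G b y x : ℝ)))^2
      = (∑ y ∈ T, (NW G a x y : ℝ) * (NW G b x y : ℝ))^2 := by
        congr 1
        exact Finset.sum_congr rfl fun y _ => by rw [NW_comm b y x]
    _ ≤ (∑ y ∈ T, (NW G a x y : ℝ)^2) * (∑ y ∈ T, (NW G b x y : ℝ)^2) := key
    _ = (∑ y ∈ T, (NW G a x y : ℝ) * (NW G a y x : ℝ)) *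
        (∑ y ∈ T, (NW G b x y : ℝ) * (NW G b y x : ℝ)) := by
        congr 1
        · exact Finset.sum_congr rfl fun y _ => by rw [NW_comm a y x]; ring
        · exact Finset.sum_congr rfl fun y _ => by rw [NW_comm b y x]; ring

lemma NW_le_iso (φ : G ≃g G) (n : ℕ) (x : V) : NW G n x x ≤ NW G n (φ x) (φ x) := by
  apply Finset.card_le_card_of_injOn (fun w => w.map φ.toHom)
  · intro w hw
    rw [Finset.mem_coe, mem_finsetWalkLength_iff] at hw ⊢
    simpa [Walk.length_map] using hw
  · intro w _ w' _ h
    exact Walk.map_injective_of_injective φ.injective _ _ h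

lemma NW_iso (φ : G ≃g G) (n : ℕ) (x : V) : NW G n x x = NW G n (φ x) (φ x) := by
  refine le_antisymm (NW_le_iso φ n x) ?_
  have h := NW_le_iso φ.symm n (φ x)
  rwa [φ.symm_apply_apply] at h

end SimpleGraph

/-- The weight of a closed walk: product of `1/deg(w_i)` over all vertices of the walk
except the last one. -/
noncomputable def walkWeight {V : Type*} (G : SimpleGraph V) [G.LocallyFinite] {x : V}
    (w : G.Walk x x) : ℝ :=
  (w.support.dropLast.map fun v => (1 : ℝ) / (G.degree v)).prod

/-- The `n`-step return probability of simple random walk at `x`. -/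
noncomputable def returnProb {V : Type*} [DecidableEq V] (G : SimpleGraph V) [G.LocallyFinite]
    (x : V) (n : ℕ) : ℝ :=
  ∑ w ∈ G.finsetWalkLength n x x, walkWeight G w

/-- Let `G` be a locally finite, connected, infinite, vertex-transitive graph
with spectral radius `ρ`. Then there are `c₁ > 0` and `n₁ ≥ 0` such that for all `k ≥ 1` and
`n ≥ 2k + n₁`: `u_{n-2k} ≥ c₁·u_n·ρ^{-2k}`. -/
theorem stmt13 {V : Type*} [DecidableEq V] (G : SimpleGraph V) [G.LocallyFinite]
    (hconn : G.Connected) [Infinite V]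
    (htrans : ∀ x y : V, ∃ φ : G ≃g G, φ x = y)
    (ρ : ℝ)
    (hρ : ∀ x : V,
      Filter.limsup (fun n : ℕ => (returnProb G x n) ^ ((n : ℝ)⁻¹)) Filter.atTop = ρ) :
    ∃ (c₁ : ℝ) (n₁ : ℕ), 0 < c₁ ∧ ∀ (x : V) (k n : ℕ), 1 ≤ k → 2 * k + n₁ ≤ n →
      c₁ * returnProb G x n * (ρ ^ (2 * k))⁻¹ ≤ returnProb G x (n - 2 * k) := by
  classical
  obtain ⟨x₀⟩ : Nonempty V := inferInstance
  set d := G.degree x₀ with hd_def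
  have hdeg : ∀ v : V, G.degree v = d := by
    intro v
    obtain ⟨φ, hφ⟩ := htrans x₀ v
    have hcard : Fintype.card (G.neighborSet x₀) = Fintype.card (G.neighborSet (φ x₀)) :=
      Fintype.card_congr (φ.mapNeighborSet x₀)
    rw [hφ] at hcard
    rw [← card_neighborSet_eq_degree, ← hcard, card_neighborSet_eq_degree]
  have hdpos : 0 < d := by
    obtain ⟨y, hy⟩ := exists_ne x₀
    obtain ⟨w⟩ := hconn.preconnected y x₀
    have hlen : 0 < w.length := by
      rcases Nat.eq_zero_or_pos w.length with h0 | h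
      · exact absurd (w.eq_of_length_eq_zero h0) hy
      · exact h
    have hadj : G.Adj x₀ (w.reverse.getVert 1) := by
      have h := w.reverse.adj_getVert_succ (i := 0) (by simpa using hlen)
      simpa [Walk.getVert_zero] using h
    rw [hd_def, ← card_neighborSet_eq_degree]
    rw [Fintype.card_pos_iff]
    exact ⟨⟨_, hadj⟩⟩
  set q : ℝ := 1 / d with hq_def
  have hq : 0 < q := by
    rw [hq_def]
    positivity
  have hret : ∀ (x : V) (n : ℕ), returnProb G x n = (NW G n x x : ℝ) * q ^ n := by
    intro x n
    rw [returnProb, NW]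
    rw [Finset.sum_congr rfl (fun w hw => show walkWeight G w = q ^ n from ?_),
      Finset.sum_const, nsmul_eq_mul]
    rw [mem_finsetWalkLength_iff] at hw
    rw [walkWeight, List.prod_eq_pow_card _ q ?_]
    · rw [List.length_map, List.length_dropLast, Walk.length_support, hw]
      simp
    · intro r hr
      simp only [List.mem_map] at hr
      obtain ⟨v, _, rfl⟩ := hr
      rw [hdeg v, hq_def]
  set u : ℕ → ℝ := fun n => returnProb G x₀ n with hu_def
  have huNW : ∀ n, u n = (NW G n x₀ x₀ : ℝ) * q ^ n := fun n => hret x₀ n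
  have hux : ∀ (x : V) (n : ℕ), returnProb G x n = u n := by
    intro x n
    obtain ⟨φ, hφ⟩ := htrans x₀ x
    rw [hret, huNW, NW_iso φ n x₀, hφ]
  have hu0 : ∀ n, 0 ≤ u n := by
    intro n
    rw [huNW]
    positivity
  have huzero : u 0 = 1 := by
    rw [huNW, NW_zero]
    simp
  have hSM : ∀ a b, u a * u b ≤ u (a + b) := by
    intro a b
    rw [huNW, huNW, huNW, pow_add]
    calc (NW G a x₀ x₀ : ℝ) * q ^ a * ((NW G b x₀ x₀ : ℝ) * q ^ b)
        = ((NW G a x₀ x₀ * NW G b x₀ x₀ : ℕ) : ℝ) * (q ^ a * q ^ b) := by push_cast; ring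
      _ ≤ (NW G (a + b) x₀ x₀ : ℝ) * (q ^ a * q ^ b) := by
          apply mul_le_mul_of_nonneg_right _ (by positivity)
          exact_mod_cast NW_supermult a b x₀
  have hCS : ∀ a b : ℕ, u (a + b) ^ 2 ≤ u (2 * a) * u (2 * b) := by
    intro a b
    rw [huNW, huNW, huNW]
    have hqq : (q ^ (a + b)) ^ 2 = q ^ (2 * a) * q ^ (2 * b) := by
      rw [← pow_mul, ← pow_add]
      congr 1
      ring
    calc ((NW G (a + b) x₀ x₀ : ℝ) * q ^ (a + b)) ^ 2
        = (NW G (a + b) x₀ x₀ : ℝ) ^ 2 * (q ^ (a + b)) ^ 2 := by ring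
      _ ≤ (NW G (2 * a) x₀ x₀ : ℝ) * (NW G (2 * b) x₀ x₀ : ℝ) * (q ^ (a + b)) ^ 2 :=
          mul_le_mul_of_nonneg_right (NW_cs a b x₀) (by positivity)
      _ = _ := by rw [hqq]; ring
  have hu2 : 0 < u 2 := by
    have hyadj : ∃ y, G.Adj x₀ y := by
      have h := hdeg x₀
      rw [← card_neighborSet_eq_degree] at h
      have : 0 < Fintype.card (G.neighborSet x₀) := by omega
      obtain ⟨⟨y, hy⟩⟩ := Fintype.card_pos_iff.mp this
      exact ⟨y, hy⟩
    obtain ⟨y, hadj⟩ := hyadj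
    have hNW : 0 < NW G 2 x₀ x₀ := Finset.card_pos.mpr
      ⟨Walk.cons hadj (Walk.cons hadj.symm Walk.nil), mem_finsetWalkLength_iff.mpr rfl⟩
    rw [huNW]
    have : (0:ℝ) < NW G 2 x₀ x₀ := by exact_mod_cast hNW
    positivity
  have hupos : ∀ j : ℕ, 0 < u (2 * j) := by
    intro j
    induction j with
    | zero => simpa [huzero] using one_pos
    | succ j ih =>
      have h2 : 2 * (j + 1) = 2 * j + 2 := by ring
      rw [h2]
      exact lt_of_lt_of_le (mul_pos ih hu2) (hSM (2 * j) 2)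
  have hule1 : ∀ n, u n ≤ 1 := by
    intro n
    have hNle : NW G n x₀ x₀ ≤ d ^ n := NW_le_pow d (fun v => le_of_eq (hdeg v)) n x₀ x₀
    rw [huNW]
    have hdq : (d : ℝ) * q = 1 := by
      rw [hq_def]
      field_simp
    calc (NW G n x₀ x₀ : ℝ) * q ^ n ≤ (d : ℝ) ^ n * q ^ n := by
          apply mul_le_mul_of_nonneg_right _ (by positivity)
          exact_mod_cast hNle
      _ = ((d : ℝ) * q) ^ n := by rw [mul_pow]
      _ = 1 := by rw [hdq, one_pow]
  have hρ₀ : Filter.limsup (fun n : ℕ => u n ^ ((n : ℝ)⁻¹)) Filter.atTop = ρ := hρ x₀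
  have hbdd : Filter.IsBoundedUnder (· ≤ ·) Filter.atTop (fun n : ℕ => u n ^ ((n : ℝ)⁻¹)) :=
    ⟨1, Filter.eventually_map.mpr (Filter.Eventually.of_forall fun n =>
      Real.rpow_le_one (hu0 n) (hule1 n) (by positivity))⟩
  have hRle : ∀ j : ℕ, 1 ≤ j → u (2 * j) ^ (((2 * j : ℕ) : ℝ))⁻¹ ≤ ρ := by
    intro j hj
    have hc : 0 < u (2 * j) := hupos j
    have hpowle : ∀ m : ℕ, u (2 * j) ^ m ≤ u (2 * j * m) := by
      intro m
      induction m with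
      | zero => simp [huzero]
      | succ m ih =>
        have h2 : 2 * j * (m + 1) = 2 * j * m + 2 * j := by ring
        rw [h2, pow_succ]
        calc u (2 * j) ^ m * u (2 * j) ≤ u (2 * j * m) * u (2 * j) :=
              mul_le_mul_of_nonneg_right ih hc.le
          _ ≤ _ := hSM _ _
    have hfreq : ∃ᶠ n in Filter.atTop,
        u (2 * j) ^ (((2 * j : ℕ) : ℝ))⁻¹ ≤ u n ^ ((n : ℝ)⁻¹) := by
      rw [Filter.frequently_atTop]
      intro N
      refine ⟨2 * j * (N + 1), ?_, ?_⟩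
      · have h1 : 1 * (N + 1) ≤ 2 * j * (N + 1) := by
          apply Nat.mul_le_mul_right
          omega
        omega
      · have h1 : (u (2 * j) ^ (N + 1) : ℝ) ^ (((2 * j * (N + 1) : ℕ) : ℝ))⁻¹
            ≤ u (2 * j * (N + 1)) ^ (((2 * j * (N + 1) : ℕ) : ℝ))⁻¹ :=
          Real.rpow_le_rpow (by positivity) (hpowle (N + 1)) (by positivity)
        refine le_trans (le_of_eq ?_) h1
        rw [← Real.rpow_natCast (u (2 * j)) (N + 1), ← Real.rpow_mul hc.le]
        congr 1
        have hn1 : ((N + 1 : ℕ) : ℝ) ≠ 0 := Nat.cast_ne_zero.mpr (by omega)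
        have hcast : ((2 * j * (N + 1) : ℕ) : ℝ) = ((2 * j : ℕ) : ℝ) * (((N + 1) : ℕ) : ℝ) := by
          push_cast
          ring
        rw [hcast, mul_inv, mul_comm (((2 * j : ℕ) : ℝ))⁻¹ _, ← mul_assoc,
          mul_inv_cancel₀ hn1, one_mul]
    rw [← hρ₀]
    exact Filter.le_limsup_of_frequently_le hfreq hbdd
  have hρpos : 0 < ρ := by
    have h := hRle 1 le_rfl
    exact lt_of_lt_of_le (Real.rpow_pos_of_pos (hupos 1) _) h
  have hle : ∀ j : ℕ, u (2 * j) ≤ ρ ^ (2 * j) := by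
    intro j
    rcases Nat.eq_zero_or_pos j with rfl | hj
    · simp [huzero]
    · have hc : 0 < u (2 * j) := hupos j
      have h := hRle j hj
      have hb0 : 0 ≤ u (2 * j) ^ (((2 * j : ℕ) : ℝ))⁻¹ := Real.rpow_nonneg hc.le _
      have h2 := pow_le_pow_left₀ hb0 h (2 * j)
      have h3 : (u (2 * j) ^ (((2 * j : ℕ) : ℝ))⁻¹) ^ (2 * j) = u (2 * j) := by
        rw [← Real.rpow_natCast (u (2 * j) ^ (((2 * j : ℕ) : ℝ))⁻¹) (2 * j),
          ← Real.rpow_mul hc.le]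
        rw [inv_mul_cancel₀ (Nat.cast_ne_zero.mpr (by omega) : ((2 * j : ℕ) : ℝ) ≠ 0)]
        exact Real.rpow_one _
      rwa [h3] at h2
  have hS : ∀ j : ℕ, u (2 * j + 2) ≤ ρ ^ 2 * u (2 * j) := by
    by_contra hcon
    push_neg at hcon
    obtain ⟨M, hM⟩ := hcon
    have hA : 0 < u (2 * M) := hupos M
    set t := u (2 * M + 2) / u (2 * M) with ht_def
    have htρ : ρ ^ 2 < t := (lt_div_iff₀ hA).mpr (by linarith)
    have htpos : 0 < t := lt_trans (by positivity) htρ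
    have mono : ∀ i : ℕ, t * u (2 * (M + i)) ≤ u (2 * (M + i) + 2) := by
      intro i
      induction i with
      | zero =>
        simp only [Nat.add_zero]
        rw [ht_def, div_mul_cancel₀ _ hA.ne']
      | succ i ih =>
        have hcs := hCS (M + i) (M + i + 2)
        rw [show (M + i) + (M + i + 2) = 2 * (M + i) + 2 from by ring] at hcs
        have hpos := hupos (M + i)
        have hpos2 : 0 ≤ u (2 * (M + i) + 2) := hu0 _
        have key : t * u (2 * (M + i) + 2) ≤ u (2 * (M + i + 2)) := by
          have h1 : t * u (2 * (M + i)) * u (2 * (M + i) + 2)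
              ≤ u (2 * (M + i) + 2) * u (2 * (M + i) + 2) :=
            mul_le_mul_of_nonneg_right ih hpos2
          have h2 : u (2 * (M + i) + 2) * u (2 * (M + i) + 2)
              ≤ u (2 * (M + i)) * u (2 * (M + i + 2)) := by
            have := hcs
            nlinarith [this]
          nlinarith [hpos, htpos, hu0 (2 * (M + i + 2))]
        calc t * u (2 * (M + (i + 1))) = t * u (2 * (M + i) + 2) := by
              rw [show 2 * (M + (i + 1)) = 2 * (M + i) + 2 from by ring]
          _ ≤ u (2 * (M + i + 2)) := key
          _ = u (2 * (M + (i + 1)) + 2) := by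
              rw [show 2 * (M + i + 2) = 2 * (M + (i + 1)) + 2 from by ring]
    have geo : ∀ i : ℕ, u (2 * M) * t ^ i ≤ u (2 * (M + i)) := by
      intro i
      induction i with
      | zero => simp
      | succ i ih =>
        calc u (2 * M) * t ^ (i + 1) = t * (u (2 * M) * t ^ i) := by ring
          _ ≤ t * u (2 * (M + i)) := mul_le_mul_of_nonneg_left ih htpos.le
          _ ≤ u (2 * (M + i) + 2) := mono i
          _ = u (2 * (M + (i + 1))) := by rw [show 2 * (M + i) + 2 = 2 * (M + (i+1)) from by ring]
    have hub : ∀ i : ℕ, (t / ρ ^ 2) ^ i ≤ ρ ^ (2 * M) / u (2 * M) := by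
      intro i
      have h1 : u (2 * M) * t ^ i ≤ ρ ^ (2 * M) * (ρ ^ 2) ^ i := by
        calc u (2 * M) * t ^ i ≤ u (2 * (M + i)) := geo i
          _ ≤ ρ ^ (2 * (M + i)) := hle (M + i)
          _ = ρ ^ (2 * M) * (ρ ^ 2) ^ i := by rw [← pow_mul, ← pow_add]; congr 1; ring
      rw [div_pow, div_le_div_iff₀ (by positivity) hA]
      calc t ^ i * u (2 * M) = u (2 * M) * t ^ i := by ring
        _ ≤ ρ ^ (2 * M) * (ρ ^ 2) ^ i := h1
        _ = ρ ^ (2 * M) * (ρ ^ 2) ^ i := rfl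
    obtain ⟨i, hi⟩ := pow_unbounded_of_one_lt (ρ ^ (2 * M) / u (2 * M))
      ((one_lt_div (by positivity : (0:ℝ) < ρ ^ 2)).mpr htρ)
    exact absurd (hub i) (not_le.mpr hi)
  have hE : ∀ j k' : ℕ, u (2 * j + 2 * k') ≤ ρ ^ (2 * k') * u (2 * j) := by
    intro j k'
    induction k' with
    | zero => simp
    | succ k' ih =>
      calc u (2 * j + 2 * (k' + 1)) = u (2 * (j + k') + 2) := by
            rw [show 2 * j + 2 * (k' + 1) = 2 * (j + k') + 2 from by ring]
        _ ≤ ρ ^ 2 * u (2 * (j + k')) := hS (j + k')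
        _ = ρ ^ 2 * u (2 * j + 2 * k') := by rw [show 2 * (j + k') = 2 * j + 2 * k' from by ring]
        _ ≤ ρ ^ 2 * (ρ ^ (2 * k') * u (2 * j)) := mul_le_mul_of_nonneg_left ih (by positivity)
        _ = ρ ^ (2 * (k' + 1)) * u (2 * j) := by
            rw [show 2 * (k' + 1) = 2 + 2 * k' from by ring, pow_add]
            ring
  have hEvenCase : ∀ c' : ℝ, 0 ≤ c' → c' ≤ 1 → ∀ k n : ℕ, 2 * k ≤ n → Even n →
      c' * u n * (ρ ^ (2 * k))⁻¹ ≤ u (n - 2 * k) := by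
    intro c' hc0 hc1 k n hkn he
    obtain ⟨c, hc⟩ := he
    have hj : n - 2 * k = 2 * (c - k) := by omega
    have key := hE (c - k) k
    rw [show 2 * (c - k) + 2 * k = n from by omega] at key
    rw [hj]
    calc c' * u n * (ρ ^ (2 * k))⁻¹ ≤ 1 * u n * (ρ ^ (2 * k))⁻¹ := by
          apply mul_le_mul_of_nonneg_right _ (by positivity)
          exact mul_le_mul_of_nonneg_right hc1 (hu0 n)
      _ = u n / ρ ^ (2 * k) := by rw [one_mul, div_eq_mul_inv]
      _ ≤ u (2 * (c - k)) := by
          rw [div_le_iff₀ (by positivity)]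
          linarith [key]
  by_cases hP : ∃ l, Odd l ∧ 0 < u l
  · obtain ⟨l, hlodd, hlpos⟩ := hP
    obtain ⟨cl, hcl⟩ := hlodd
    refine ⟨min 1 (u l / ρ ^ l), l, lt_min one_pos (div_pos hlpos (by positivity)), ?_⟩
    intro x k n hk hn
    rw [hux, hux]
    have hc0 : (0:ℝ) ≤ min 1 (u l / ρ ^ l) := le_min zero_le_one (by positivity)
    rcases Nat.even_or_odd n with he | ho
    · exact hEvenCase _ hc0 (min_le_left _ _) k n (by omega) he
    · -- odd case
      set m := n - 2 * k with hm_def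
      have hml : l ≤ m := by omega
      have hmn : n = m + 2 * k := by omega
      have hmodd : Odd m := by
        rcases Nat.even_or_odd m with hme | hmo
        · exfalso
          obtain ⟨a, ha⟩ := hme
          obtain ⟨b, hb⟩ := ho
          omega
        · exact hmo
      obtain ⟨b, hb⟩ := hmodd
      have hbc : cl ≤ b := by omega
      have f1 := hCS (b + k) (b + k + 1)
      rw [show (b + k) + (b + k + 1) = n from by omega] at f1
      have f2' := hE b k
      rw [show 2 * b + 2 * k = 2 * (b + k) from by ring] at f2'
      have f3 := hE b (k + 1)
      rw [show 2 * b + 2 * (k + 1) = 2 * (b + k + 1) from by ring] at f3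
      have hsq : u n ^ 2 ≤ (ρ ^ (2 * k + 1) * u (2 * b)) ^ 2 := by
        have hmul : ρ ^ (2 * k) * ρ ^ (2 * (k + 1)) = (ρ ^ (2 * k + 1)) ^ 2 := by
          rw [← pow_add, ← pow_mul]
          congr 1
          ring
        calc u n ^ 2 ≤ u (2 * (b + k)) * u (2 * (b + k + 1)) := f1
          _ ≤ (ρ ^ (2 * k) * u (2 * b)) * (ρ ^ (2 * (k + 1)) * u (2 * b)) := by
              exact mul_le_mul f2' f3 (hu0 _) (mul_nonneg (by positivity) (hu0 _))
          _ = (ρ ^ (2 * k) * ρ ^ (2 * (k + 1))) * (u (2 * b) * u (2 * b)) := by ring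
          _ = (ρ ^ (2 * k + 1) * u (2 * b)) ^ 2 := by rw [hmul]; ring
      have f4 : u n ≤ ρ ^ (2 * k + 1) * u (2 * b) := by
        have h5 : (0:ℝ) ≤ ρ ^ (2 * k + 1) * u (2 * b) := mul_nonneg (by positivity) (hu0 _)
        have hs := Real.sqrt_le_sqrt hsq
        rwa [Real.sqrt_sq (hu0 n), Real.sqrt_sq h5] at hs
      have f5 := hE (b - cl) cl
      rw [show 2 * (b - cl) + 2 * cl = 2 * b from by omega] at f5
      have f6 := hSM (2 * (b - cl)) l
      rw [show 2 * (b - cl) + l = m from by omega] at f6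
      have hcalc : u l * u n ≤ ρ ^ (l + 2 * k) * u m := by
        calc u l * u n ≤ u l * (ρ ^ (2 * k + 1) * u (2 * b)) :=
              mul_le_mul_of_nonneg_left f4 hlpos.le
          _ ≤ u l * (ρ ^ (2 * k + 1) * (ρ ^ (2 * cl) * u (2 * (b - cl)))) := by
              apply mul_le_mul_of_nonneg_left _ hlpos.le
              exact mul_le_mul_of_nonneg_left f5 (by positivity)
          _ = ρ ^ (2 * k + 1 + 2 * cl) * (u (2 * (b - cl)) * u l) := by
              rw [pow_add]
              ring
          _ ≤ ρ ^ (2 * k + 1 + 2 * cl) * u m := mul_le_mul_of_nonneg_left f6 (by positivity)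
          _ = ρ ^ (l + 2 * k) * u m := by rw [show l + 2 * k = 2 * k + 1 + 2 * cl from by omega]
      calc min 1 (u l / ρ ^ l) * u n * (ρ ^ (2 * k))⁻¹
          ≤ (u l / ρ ^ l) * u n * (ρ ^ (2 * k))⁻¹ := by
            apply mul_le_mul_of_nonneg_right _ (by positivity)
            exact mul_le_mul_of_nonneg_right (min_le_right _ _) (hu0 n)
        _ = (u l * u n) / ρ ^ (l + 2 * k) := by
            rw [pow_add, div_eq_mul_inv, div_eq_mul_inv, mul_inv]
            ring
        _ ≤ u m := by
            rw [div_le_iff₀ (by positivity)]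
            linarith [hcalc]
  · refine ⟨1, 0, one_pos, ?_⟩
    intro x k n hk hn
    rw [hux, hux]
    rcases Nat.even_or_odd n with he | ho
    · exact hEvenCase 1 zero_le_one le_rfl k n (by omega) he
    · have hn0 : u n = 0 := by
        by_contra h
        exact hP ⟨n, ho, lt_of_le_of_ne (hu0 n) (Ne.symm h)⟩
      rw [hn0]
      simpa using hu0 (n - 2 * k)
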